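/- The rotating Kepler Hamiltonian H_R has exactly one critical value, namely -3/2. More precisely, a point (q,p) in (ℝ²∖{(0,0)})×ℝ² is a critical point of H_R if and only if |q| = 1 and p = (q₂, -q₁), and at every such critical point H_R(q,p) = -3/2; hence the set of critical values of H_R equals {-3/2}. -/

import Mathlib

noncomputable def coordA : ((ℝ × ℝ) × (ℝ × ℝ)) →L[ℝ] ℝ :=
  (ContinuousLinearMap.fst ℝ ℝ ℝ).comp (ContinuousLinearMap.fst ℝ (ℝ × ℝ) (ℝ × ℝ))
noncomputable def coordB : ((ℝ × ℝ) × (ℝ × ℝ)) →L[ℝ] ℝ :=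
  (ContinuousLinearMap.snd ℝ ℝ ℝ).comp (ContinuousLinearMap.fst ℝ (ℝ × ℝ) (ℝ × ℝ))
noncomputable def coordC : ((ℝ × ℝ) × (ℝ × ℝ)) →L[ℝ] ℝ :=
  (ContinuousLinearMap.fst ℝ ℝ ℝ).comp (ContinuousLinearMap.snd ℝ (ℝ × ℝ) (ℝ × ℝ))
noncomputable def coordD : ((ℝ × ℝ) × (ℝ × ℝ)) →L[ℝ] ℝ :=
  (ContinuousLinearMap.snd ℝ ℝ ℝ).comp (ContinuousLinearMap.snd ℝ (ℝ × ℝ) (ℝ × ℝ))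


/-- The rotating Kepler Hamiltonian `H_R(q,p) = ½|p|² − 1/|q| + q₁p₂ − q₂p₁`
on `(ℝ²∖{0}) × ℝ²`, written with coordinates. -/
noncomputable def HR (x : (ℝ × ℝ) × (ℝ × ℝ)) : ℝ :=
  (1/2) * (x.2.1^2 + x.2.2^2) - 1 / Real.sqrt (x.1.1^2 + x.1.2^2)
    + x.1.1 * x.2.2 - x.1.2 * x.2.1

lemma hr_deriv (q p : ℝ × ℝ) (hq : q ≠ 0) :
    HasFDerivAt HR
      ((q.1 / (Real.sqrt (q.1^2 + q.2^2))^3 + p.2) • coordA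
        + (q.2 / (Real.sqrt (q.1^2 + q.2^2))^3 - p.1) • coordB
        + (p.1 - q.2) • coordC + (p.2 + q.1) • coordD) (q, p) := by
  have hq' : q.1 ≠ 0 ∨ q.2 ≠ 0 := by
    by_contra h; push_neg at h
    exact hq (Prod.ext h.1 h.2)
  have hs : (0:ℝ) < q.1^2 + q.2^2 := by
    rcases hq' with h | h <;> positivity
  have hr0 : Real.sqrt (q.1^2 + q.2^2) > 0 := Real.sqrt_pos.mpr hs
  have hrsq : Real.sqrt (q.1^2 + q.2^2) ^ 2 = q.1^2 + q.2^2 := Real.sq_sqrt hs.le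
  have hA : HasFDerivAt (fun x : (ℝ × ℝ) × (ℝ × ℝ) => x.1.1) coordA (q, p) :=
    coordA.hasFDerivAt
  have hB : HasFDerivAt (fun x : (ℝ × ℝ) × (ℝ × ℝ) => x.1.2) coordB (q, p) :=
    coordB.hasFDerivAt
  have hC : HasFDerivAt (fun x : (ℝ × ℝ) × (ℝ × ℝ) => x.2.1) coordC (q, p) :=
    coordC.hasFDerivAt
  have hD : HasFDerivAt (fun x : (ℝ × ℝ) × (ℝ × ℝ) => x.2.2) coordD (q, p) :=
    coordD.hasFDerivAt
  have hA2 : HasFDerivAt (fun x : (ℝ × ℝ) × (ℝ × ℝ) => x.1.1 ^ 2)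
      (((2:ℕ) * q.1 ^ (2-1) : ℝ) • coordA) (q, p) :=
    ((hasDerivAt_pow 2 q.1).comp_hasFDerivAt ((q, p) : (ℝ × ℝ) × (ℝ × ℝ)) hA :)
  have hB2 : HasFDerivAt (fun x : (ℝ × ℝ) × (ℝ × ℝ) => x.1.2 ^ 2)
      (((2:ℕ) * q.2 ^ (2-1) : ℝ) • coordB) (q, p) :=
    ((hasDerivAt_pow 2 q.2).comp_hasFDerivAt ((q, p) : (ℝ × ℝ) × (ℝ × ℝ)) hB :)
  have hC2 : HasFDerivAt (fun x : (ℝ × ℝ) × (ℝ × ℝ) => x.2.1 ^ 2)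
      (((2:ℕ) * p.1 ^ (2-1) : ℝ) • coordC) (q, p) :=
    ((hasDerivAt_pow 2 p.1).comp_hasFDerivAt ((q, p) : (ℝ × ℝ) × (ℝ × ℝ)) hC :)
  have hD2 : HasFDerivAt (fun x : (ℝ × ℝ) × (ℝ × ℝ) => x.2.2 ^ 2)
      (((2:ℕ) * p.2 ^ (2-1) : ℝ) • coordD) (q, p) :=
    ((hasDerivAt_pow 2 p.2).comp_hasFDerivAt ((q, p) : (ℝ × ℝ) × (ℝ × ℝ)) hD :)
  have hS : HasFDerivAt (fun x : (ℝ × ℝ) × (ℝ × ℝ) => x.1.1^2 + x.1.2^2)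
      ((((2:ℕ) * q.1 ^ (2-1) : ℝ)) • coordA + (((2:ℕ) * q.2 ^ (2-1) : ℝ)) • coordB) (q, p) :=
    hA2.add hB2
  have hg : HasDerivAt (fun y : ℝ => 1 / Real.sqrt y)
      ((0 * Real.sqrt (q.1^2 + q.2^2) - 1 * (1 / (2 * Real.sqrt (q.1^2 + q.2^2)))) /
        (Real.sqrt (q.1^2 + q.2^2)) ^ 2) (q.1^2 + q.2^2) :=
    (hasDerivAt_const _ (1:ℝ)).div (Real.hasDerivAt_sqrt hs.ne') hr0.ne'
  have hInv := hg.comp_hasFDerivAt ((q, p) : (ℝ × ℝ) × (ℝ × ℝ)) hS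
  have hH := ((((hC2.add hD2).const_mul (1/2:ℝ)).sub hInv).add (hA.mul hD)).sub (hB.mul hC)
  refine hH.congr_fderiv ?_
  refine ContinuousLinearMap.ext fun v => ?_
  simp only [coordA, coordB, coordC, coordD, ContinuousLinearMap.add_apply,
    ContinuousLinearMap.sub_apply, ContinuousLinearMap.smul_apply,
    ContinuousLinearMap.comp_apply, ContinuousLinearMap.coe_fst',
    ContinuousLinearMap.coe_snd', smul_eq_mul]
  have h3 : (Real.sqrt (q.1^2 + q.2^2))^3 = (q.1^2+q.2^2) * Real.sqrt (q.1^2 + q.2^2) := by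
    rw [pow_succ, hrsq]
  rw [h3]
  field_simp
  rw [h3, hrsq]
  ring


set_option maxHeartbeats 1000000 in
/-- The rotating Kepler Hamiltonian has exactly one critical value, `-3/2`:
`(q,p)` with `q ≠ 0` is a critical point of `H_R` iff `|q| = 1` and
`p = (q₂, -q₁)`; every critical point has value `-3/2`; and the set of
critical values of `H_R` equals `{-3/2}`. -/
theorem rotating_kepler_critical_value :
    (∀ q p : ℝ × ℝ, q ≠ 0 →
      (HasFDerivAt HR (0 : ((ℝ × ℝ) × (ℝ × ℝ)) →L[ℝ] ℝ) (q, p) ↔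
        Real.sqrt (q.1^2 + q.2^2) = 1 ∧ p = (q.2, -q.1))) ∧
    (∀ q p : ℝ × ℝ, q ≠ 0 →
      HasFDerivAt HR (0 : ((ℝ × ℝ) × (ℝ × ℝ)) →L[ℝ] ℝ) (q, p) →
      HR (q, p) = -(3/2)) ∧
    {c : ℝ | ∃ q p : ℝ × ℝ, q ≠ 0 ∧
        HasFDerivAt HR (0 : ((ℝ × ℝ) × (ℝ × ℝ)) →L[ℝ] ℝ) (q, p) ∧
        HR (q, p) = c} = {-(3/2)} := by
  have key : ∀ q p : ℝ × ℝ, q ≠ 0 →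
      (HasFDerivAt HR (0 : ((ℝ × ℝ) × (ℝ × ℝ)) →L[ℝ] ℝ) (q, p) ↔
        Real.sqrt (q.1^2 + q.2^2) = 1 ∧ p = (q.2, -q.1)) := by
    intro q p hq
    have hq' : q.1 ≠ 0 ∨ q.2 ≠ 0 := by
      by_contra h; push_neg at h
      exact hq (Prod.ext h.1 h.2)
    have hs : (0:ℝ) < q.1^2 + q.2^2 := by
      rcases hq' with h | h <;> positivity
    have hr0 : Real.sqrt (q.1^2 + q.2^2) > 0 := Real.sqrt_pos.mpr hs
    have hD := hr_deriv q p hq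
    constructor
    · intro h0
      have huniq := h0.unique hD
      have e1 := congrArg (fun L : ((ℝ × ℝ) × (ℝ × ℝ)) →L[ℝ] ℝ => L ((1,0),(0,0))) huniq
      have e2 := congrArg (fun L : ((ℝ × ℝ) × (ℝ × ℝ)) →L[ℝ] ℝ => L ((0,1),(0,0))) huniq
      have e3 := congrArg (fun L : ((ℝ × ℝ) × (ℝ × ℝ)) →L[ℝ] ℝ => L ((0,0),(1,0))) huniq
      have e4 := congrArg (fun L : ((ℝ × ℝ) × (ℝ × ℝ)) →L[ℝ] ℝ => L ((0,0),(0,1))) huniq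
      simp only [coordA, coordB, coordC, coordD, ContinuousLinearMap.zero_apply,
        ContinuousLinearMap.add_apply, ContinuousLinearMap.smul_apply,
        ContinuousLinearMap.comp_apply, ContinuousLinearMap.coe_fst',
        ContinuousLinearMap.coe_snd', smul_eq_mul, mul_one, mul_zero,
        add_zero, zero_add] at e1 e2 e3 e4
      have hp1 : p.1 = q.2 := by linarith [e3]
      have hp2 : p.2 = -q.1 := by linarith [e4]
      have hr3 : Real.sqrt (q.1^2 + q.2^2) ^ 3 = 1 := by
        rcases hq' with h | h
        · have : q.1 / Real.sqrt (q.1^2 + q.2^2) ^ 3 = q.1 := by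
            rw [hp2] at e1; linarith [e1]
          field_simp at this
          nlinarith [this]
        · have : q.2 / Real.sqrt (q.1^2 + q.2^2) ^ 3 = q.2 := by
            rw [hp1] at e2; linarith [e2]
          field_simp at this
          nlinarith [this]
      have hr1 : Real.sqrt (q.1^2 + q.2^2) = 1 := by
        nlinarith [hr0, hr3, sq_nonneg (Real.sqrt (q.1^2 + q.2^2) - 1),
          sq_nonneg (Real.sqrt (q.1^2 + q.2^2) + 1)]
      exact ⟨hr1, Prod.ext hp1 hp2⟩
    · rintro ⟨hr1, hp⟩
      have hzero : ((q.1 / (Real.sqrt (q.1^2 + q.2^2))^3 + p.2) • coordA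
          + (q.2 / (Real.sqrt (q.1^2 + q.2^2))^3 - p.1) • coordB
          + (p.1 - q.2) • coordC + (p.2 + q.1) • coordD)
          = (0 : ((ℝ × ℝ) × (ℝ × ℝ)) →L[ℝ] ℝ) := by
        rw [hr1, hp]
        simp
      exact hzero ▸ hD
  have val : ∀ q p : ℝ × ℝ, q ≠ 0 →
      HasFDerivAt HR (0 : ((ℝ × ℝ) × (ℝ × ℝ)) →L[ℝ] ℝ) (q, p) →
      HR (q, p) = -(3/2) := by
    intro q p hq h0
    obtain ⟨hr1, hp⟩ := (key q p hq).mp h0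
    have hq' : q.1 ≠ 0 ∨ q.2 ≠ 0 := by
      by_contra h; push_neg at h
      exact hq (Prod.ext h.1 h.2)
    have hs : (0:ℝ) < q.1^2 + q.2^2 := by
      rcases hq' with h | h <;> positivity
    have hs1 : q.1^2 + q.2^2 = 1 := by
      have := Real.sq_sqrt hs.le
      rw [hr1] at this
      simpa using this.symm
    rw [hp]
    simp only [HR, hr1]
    norm_num
    linarith [hs1]
  refine ⟨key, val, ?_⟩
  ext c
  simp only [Set.mem_setOf_eq, Set.mem_singleton_iff]
  constructor
  · rintro ⟨q, p, hq, h0, hv⟩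
    rw [← hv]; exact val q p hq h0
  · intro hc
    refine ⟨(1, 0), (0, -1), ?_, ?_, ?_⟩
    · simp [Prod.ext_iff]
    · refine (key (1,0) (0,-1) (by simp [Prod.ext_iff])).mpr ⟨?_, ?_⟩
      · norm_num
      · norm_num
    · rw [hc]
      exact val (1,0) (0,-1) (by simp [Prod.ext_iff])
        ((key (1,0) (0,-1) (by simp [Prod.ext_iff])).mpr ⟨by norm_num, by norm_num⟩)
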